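/- Let d ≥ 1 and n ≥ 1 with dn even, and let P be a perfect matching chosen uniformly at random on a set of dn points partitioned into n buckets of d points each. Let s, e be integers with 0 ≤ s ≤ n, 0 ≤ 2e ≤ ds and ds − 2e ≤ d(n−s). Then the expected number of sets S of s buckets such that exactly e pairs of P have both of their points in buckets of S equals C(n,s) · C(ds, 2e) · C(d(n−s), ds−2e) · (ds−2e)! · M(2e) · M(d(n−s) − (ds−2e)) / M(dn), where M(2i) = (2i)! / (i! · 2^i) is the number of perfect matchings of 2i points and C(a,b) denotes the binomial coefficient. -/

import Mathlib

open Finset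

noncomputable section

/-- `M(k) = k!/((k/2)!·2^{k/2})`, the number of perfect matchings of `k` points
(for `k` even), as a real number. -/
noncomputable def Mpair (k : ℕ) : ℝ :=
  (Nat.factorial k : ℝ) / ((Nat.factorial (k / 2) : ℝ) * 2 ^ (k / 2))

/-- The pairings of `d·n` points (grouped into `n` buckets of `d` consecutive points:
point `x` lies in bucket `x/d`): permutations that are involutions without fixed
points, i.e. perfect matchings. -/
def pairings (d n : ℕ) : Finset (Equiv.Perm (Fin (d * n))) :=
  Finset.univ.filter (fun P => ∀ x, P x ≠ x ∧ P (P x) = x)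

/-- The number of sets `S` of exactly `s` buckets such that exactly `e` pairs of the
pairing `P` have both of their points in buckets of `S` (counted via the `2e`
points covered by such pairs). -/
def goodSets (d n s e : ℕ) (P : Equiv.Perm (Fin (d * n))) : ℕ :=
  (((Finset.range n).powersetCard s).filter
    (fun S => (Finset.univ.filter
      (fun x : Fin (d * n) => (x : ℕ) / d ∈ S ∧ ((P x : ℕ)) / d ∈ S)).card = 2 * e)).card

set_option linter.unusedSectionVars false
set_option linter.unusedVariables false
set_option maxHeartbeats 1000000


def mm2 : ℕ → ℕ
  | 0 => 1
  | (e+1) => (2*e+1) * mm2 e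

lemma mm2_pos (k : ℕ) : 0 < mm2 k := by
  induction k with
  | zero => simp [mm2]
  | succ e ih => exact Nat.mul_pos (by omega) ih

lemma fact_two_mul (k : ℕ) : (2*k).factorial = mm2 k * (k.factorial * 2^k) := by
  induction k with
  | zero => simp [mm2]
  | succ e ih =>
      have h2 : 2*(e+1) = (2*e+1)+1 := by ring
      rw [h2, Nat.factorial_succ, Nat.factorial_succ, ih, mm2, Nat.factorial_succ]
      ring

def matchings (α : Type) [Fintype α] [DecidableEq α] : Finset (Equiv.Perm α) :=
  Finset.univ.filter (fun P => ∀ x, P x ≠ x ∧ P (P x) = x)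

def cnt (α : Type) [Fintype α] [DecidableEq α] (A : Finset α) (e : ℕ) : ℕ :=
  ((matchings α).filter (fun P => (A.filter (fun x => P x ∈ A)).card = 2*e)).card

def Hf (e c f : ℕ) : ℕ :=
  (2*e+c).choose (2*e) * mm2 e * ((c+2*f).descFactorial c) * mm2 f

lemma key_id (e c f : ℕ) :
    Hf (e+1) (c+1) f = (2*e+c+2) * Hf e (c+1) f + (c+1+2*f) * Hf (e+1) c f := by
  have pas : (2*e+c+3).choose (2*e+2) = (2*e+c+2).choose (2*e+1) + (2*e+c+2).choose (2*e+2) :=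
    by simpa using Nat.choose_succ_succ' (2*e+c+2) (2*e+1)
  have smc : (2*e+c+2) * (2*e+c+1).choose (2*e) = (2*e+c+2).choose (2*e+1) * (2*e+1) := by
    have := Nat.add_one_mul_choose_eq (2*e+c+1) (2*e)
    simpa [Nat.succ_eq_add_one] using this
  have desc : (c+1+2*f).descFactorial (c+1) = (c+1+2*f) * ((c+2*f).descFactorial c) := by
    have := Nat.succ_descFactorial_succ (c+2*f) c
    simpa [show c+2*f+1 = c+1+2*f by ring] using this
  have e1 : Hf (e+1) (c+1) f
      = ((2*e+c+2).choose (2*e+1) + (2*e+c+2).choose (2*e+2)) * ((2*e+1) * mm2 e)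
        * ((c+1+2*f) * ((c+2*f).descFactorial c)) * mm2 f := by
    simp only [Hf, mm2]
    rw [show 2*(e+1)+(c+1) = 2*e+c+3 by ring, show 2*(e+1) = 2*e+2 by ring, desc, pas]
  have e2 : Hf e (c+1) f
      = (2*e+c+1).choose (2*e) * mm2 e * ((c+1+2*f) * ((c+2*f).descFactorial c)) * mm2 f := by
    simp only [Hf]
    rw [show 2*e+(c+1) = 2*e+c+1 by ring, desc]
  have e3 : Hf (e+1) c f
      = (2*e+c+2).choose (2*e+2) * ((2*e+1) * mm2 e) * ((c+2*f).descFactorial c) * mm2 f := by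
    simp only [Hf, mm2]
    rw [show 2*(e+1)+c = 2*e+c+2 by ring, show 2*(e+1) = 2*e+2 by ring]
  rw [e1, e2, e3]
  zify at smc ⊢
  linear_combination (-(mm2 e : ℤ) * (c+1+2*f) * ((c+2*f).descFactorial c) * mm2 f) * smc

lemma key_id0 (e f : ℕ) : Hf (e+1) 0 f = (2*e+1) * Hf e 0 f := by
  simp only [Hf, mm2, Nat.add_zero, Nat.choose_self, Nat.descFactorial_zero]
  ring

lemma key_ide (c f : ℕ) : Hf 0 (c+1) f = (c+1+2*f) * Hf 0 c f := by
  have desc : (c+1+2*f).descFactorial (c+1) = (c+1+2*f) * ((c+2*f).descFactorial c) := by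
    have := Nat.succ_descFactorial_succ (c+2*f) c
    simpa [show c+2*f+1 = c+1+2*f by ring] using this
  simp only [Hf, Nat.mul_zero, Nat.zero_add, Nat.choose_zero_right, desc]
  ring


lemma mem_matchings {α : Type} [Fintype α] [DecidableEq α] {P : Equiv.Perm α} :
    P ∈ matchings α ↔ ∀ x, P x ≠ x ∧ P (P x) = x := by simp [matchings]

lemma cnt_zero {α : Type} [Fintype α] [DecidableEq α] (A : Finset α) (e : ℕ)
    (h : A.card < 2*e) : cnt α A e = 0 := by
  rw [cnt, Finset.card_eq_zero, Finset.filter_eq_empty_iff]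
  intro P _
  exact fun hc => absurd hc (by have := Finset.card_filter_le A (fun x => P x ∈ A); omega)

section Bij
variable {α : Type} [Fintype α] [DecidableEq α] (x0 y : α)

def extP (Q : Equiv.Perm {z : α // z ≠ x0 ∧ z ≠ y}) : Equiv.Perm α :=
  Equiv.swap x0 y * Equiv.Perm.ofSubtype Q

lemma extP_x0 (Q : Equiv.Perm {z : α // z ≠ x0 ∧ z ≠ y}) : extP x0 y Q x0 = y := by
  simp [extP, Equiv.Perm.ofSubtype_apply_of_not_mem (p := fun z => z ≠ x0 ∧ z ≠ y) Q
    (by simp : ¬(x0 ≠ x0 ∧ x0 ≠ y))]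

lemma extP_y (Q : Equiv.Perm {z : α // z ≠ x0 ∧ z ≠ y}) : extP x0 y Q y = x0 := by
  simp [extP, Equiv.Perm.ofSubtype_apply_of_not_mem (p := fun z => z ≠ x0 ∧ z ≠ y) Q
    (by simp : ¬(y ≠ x0 ∧ y ≠ y))]

lemma extP_apply (Q : Equiv.Perm {z : α // z ≠ x0 ∧ z ≠ y}) (z : α) (hz : z ≠ x0 ∧ z ≠ y) :
    extP x0 y Q z = (Q ⟨z, hz⟩ : α) := by
  have h1 : Equiv.Perm.ofSubtype Q z = (Q ⟨z, hz⟩ : α) :=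
    Equiv.Perm.ofSubtype_apply_of_mem Q hz
  have h2 := (Q ⟨z, hz⟩).2
  simp [extP, h1, Equiv.swap_apply_of_ne_of_ne h2.1 h2.2]

lemma extP_mem (hxy : x0 ≠ y) {Q : Equiv.Perm {z : α // z ≠ x0 ∧ z ≠ y}}
    (hQ : Q ∈ matchings _) : extP x0 y Q ∈ matchings α := by
  rw [mem_matchings] at hQ ⊢
  intro z
  by_cases h0 : z = x0
  · subst h0
    rw [extP_x0, extP_y]
    exact ⟨Ne.symm hxy, rfl⟩
  · by_cases h1 : z = y
    · subst h1
      rw [extP_y, extP_x0]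
      exact ⟨hxy, rfl⟩
    · rw [extP_apply x0 y Q z ⟨h0, h1⟩]
      have h2 := (Q ⟨z, ⟨h0, h1⟩⟩).2
      rw [extP_apply x0 y Q _ h2]
      constructor
      · intro h
        exact absurd (Subtype.ext h) (hQ ⟨z, ⟨h0, h1⟩⟩).1
      · have := (hQ ⟨z, ⟨h0, h1⟩⟩).2
        simp only [Subtype.ext_iff] at this
        simpa using this

def resP (P : Equiv.Perm α) (hP : ∀ x, P x ≠ x ∧ P (P x) = x) (hx : P x0 = y) :
    Equiv.Perm {z : α // z ≠ x0 ∧ z ≠ y} :=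
  P.subtypePerm (by
    intro z
    rw [iff_comm]
    constructor
    · rintro ⟨h1, h2⟩
      constructor
      · intro h
        exact h2 (by rw [← (hP z).2, h, hx])
      · intro h
        exact h1 (P.injective (h.trans hx.symm))
    · rintro ⟨h1, h2⟩
      constructor
      · intro h
        exact h2 (by rw [h, hx])
      · intro h
        apply h1
        rw [h, ← hx, (hP x0).2])

lemma ext_res (P : Equiv.Perm α) (hP : ∀ x, P x ≠ x ∧ P (P x) = x) (hx : P x0 = y)
    (hxy : x0 ≠ y) : extP x0 y (resP x0 y P hP hx) = P := by
  apply Equiv.ext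
  intro z
  by_cases h0 : z = x0
  · subst h0; rw [extP_x0, hx]
  · by_cases h1 : z = y
    · subst h1
      rw [extP_y, ← hx, (hP x0).2]
    · rw [extP_apply x0 y _ z ⟨h0, h1⟩]
      rfl

lemma res_ext (Q : Equiv.Perm {z : α // z ≠ x0 ∧ z ≠ y}) (hxy : x0 ≠ y)
    (hP : ∀ x, extP x0 y Q x ≠ x ∧ extP x0 y Q (extP x0 y Q x) = x)
    (hx : extP x0 y Q x0 = y) :
    resP x0 y (extP x0 y Q) hP hx = Q := by
  apply Equiv.ext
  intro z
  apply Subtype.ext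
  have : (resP x0 y (extP x0 y Q) hP hx z : α) = extP x0 y Q (z : α) := rfl
  rw [this, extP_apply x0 y Q (z : α) z.2]

lemma fiber_card (hxy : x0 ≠ y) (p : Equiv.Perm α → Prop) [DecidablePred p] :
    ((matchings α).filter (fun P => P x0 = y ∧ p P)).card
      = ((matchings {z : α // z ≠ x0 ∧ z ≠ y}).filter (fun Q => p (extP x0 y Q))).card := by
  refine Finset.card_bij'
    (i := fun P hP => resP x0 y P
      (mem_matchings.mp (Finset.mem_filter.mp hP).1)
      ((Finset.mem_filter.mp hP).2.1))
    (j := fun Q _ => extP x0 y Q) (hi := ?_) (hj := ?_) (left_inv := ?_) (right_inv := ?_)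
  · intro P hP
    have h := Finset.mem_filter.mp hP
    have hm := mem_matchings.mp h.1
    have hx := h.2.1
    have hp := h.2.2
    rw [Finset.mem_filter]
    constructor
    · rw [mem_matchings]
      intro z
      constructor
      · intro h'
        exact (hm z).1 (congrArg Subtype.val h')
      · exact Subtype.ext ((hm z).2)
    · rw [ext_res x0 y P hm hx hxy]
      exact hp
  · intro Q hQ
    have h := Finset.mem_filter.mp hQ
    rw [Finset.mem_filter]
    exact ⟨extP_mem x0 y hxy h.1, extP_x0 x0 y Q, h.2⟩
  · intro P hP
    exact ext_res x0 y P _ _ hxy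
  · intro Q hQ
    exact res_ext x0 y Q hxy _ _

lemma card_beta (hxy : x0 ≠ y) :
    Fintype.card {z : α // z ≠ x0 ∧ z ≠ y} = Fintype.card α - 2 := by
  rw [Fintype.card_subtype]
  have h : (univ.filter (fun z : α => z ≠ x0 ∧ z ≠ y)) = (univ.erase x0).erase y := by
    ext z
    simp only [Finset.mem_filter, Finset.mem_erase, Finset.mem_univ, and_true, true_and]
    tauto
  rw [h, Finset.card_erase_of_mem (Finset.mem_erase.mpr ⟨Ne.symm hxy, Finset.mem_univ y⟩),
    Finset.card_erase_of_mem (Finset.mem_univ x0), Finset.card_univ]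
  omega

lemma card_Asub (A : Finset α) :
    (univ.filter (fun z : {z : α // z ≠ x0 ∧ z ≠ y} => (z : α) ∈ A)).card
      = ((A.erase x0).erase y).card := by
  refine Finset.card_bij (i := fun z _ => (z : α)) ?_ ?_ ?_
  · intro z hz
    simp only [Finset.mem_filter, Finset.mem_univ, true_and] at hz
    exact Finset.mem_erase.mpr ⟨z.2.2, Finset.mem_erase.mpr ⟨z.2.1, hz⟩⟩
  · intro z1 _ z2 _ h
    exact Subtype.ext h
  · intro w hw
    simp only [Finset.mem_erase] at hw
    exact ⟨⟨w, hw.2.1, hw.1⟩, by simp [hw.2.2], rfl⟩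

lemma filter_erase_card (A : Finset α) (hxy : x0 ≠ y)
    (Q : Equiv.Perm {z : α // z ≠ x0 ∧ z ≠ y}) :
    (((A.filter (fun x => extP x0 y Q x ∈ A)).erase x0).erase y).card
      = ((univ.filter (fun z : {z : α // z ≠ x0 ∧ z ≠ y} => (z : α) ∈ A)).filter
          (fun z => Q z ∈ univ.filter
            (fun w : {z : α // z ≠ x0 ∧ z ≠ y} => (w : α) ∈ A))).card := by
  refine Finset.card_bij (i := fun x hx => (⟨x, by
      have h := Finset.mem_erase.mp hx
      have h2 := Finset.mem_erase.mp h.2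
      exact ⟨h2.1, h.1⟩⟩ : {z : α // z ≠ x0 ∧ z ≠ y})) ?_ ?_ ?_
  · intro x hx
    have h := Finset.mem_erase.mp hx
    have h2 := Finset.mem_erase.mp h.2
    have h3 := Finset.mem_filter.mp h2.2
    simp only [Finset.mem_filter, Finset.mem_univ, true_and]
    refine ⟨h3.1, ?_⟩
    have := h3.2
    rwa [extP_apply x0 y Q x ⟨h2.1, h.1⟩] at this
  · intro x1 _ x2 _ h
    exact congrArg Subtype.val h
  · intro z hz
    simp only [Finset.mem_filter, Finset.mem_univ, true_and] at hz
    refine ⟨(z : α), ?_, by simp⟩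
    refine Finset.mem_erase.mpr ⟨z.2.2, Finset.mem_erase.mpr ⟨z.2.1, ?_⟩⟩
    refine Finset.mem_filter.mpr ⟨hz.1, ?_⟩
    rw [extP_apply x0 y Q (z : α) z.2]
    simpa using hz.2

lemma cond_out (A : Finset α) (hxy : x0 ≠ y) (hy : y ∉ A)
    (Q : Equiv.Perm {z : α // z ≠ x0 ∧ z ≠ y}) :
    (A.filter (fun x => extP x0 y Q x ∈ A)).card
      = ((univ.filter (fun z : {z : α // z ≠ x0 ∧ z ≠ y} => (z : α) ∈ A)).filter
          (fun z => Q z ∈ univ.filter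
            (fun w : {z : α // z ≠ x0 ∧ z ≠ y} => (w : α) ∈ A))).card := by
  rw [← filter_erase_card x0 y A hxy Q]
  rw [Finset.erase_eq_of_notMem, Finset.erase_eq_of_notMem]
  · intro h
    have := (Finset.mem_filter.mp h).2
    rw [extP_x0] at this
    exact hy this
  · intro h
    exact hy (Finset.mem_filter.mp (Finset.mem_erase.mp h).2).1

lemma cond_in (A : Finset α) (hxy : x0 ≠ y) (hx0 : x0 ∈ A) (hy : y ∈ A)
    (Q : Equiv.Perm {z : α // z ≠ x0 ∧ z ≠ y}) :
    (A.filter (fun x => extP x0 y Q x ∈ A)).card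
      = ((univ.filter (fun z : {z : α // z ≠ x0 ∧ z ≠ y} => (z : α) ∈ A)).filter
          (fun z => Q z ∈ univ.filter
            (fun w : {z : α // z ≠ x0 ∧ z ≠ y} => (w : α) ∈ A))).card + 2 := by
  rw [← filter_erase_card x0 y A hxy Q]
  set S := A.filter (fun x => extP x0 y Q x ∈ A) with hS
  have h1 : x0 ∈ S := Finset.mem_filter.mpr ⟨hx0, by rw [extP_x0]; exact hy⟩
  have h2 : y ∈ S.erase x0 :=
    Finset.mem_erase.mpr ⟨Ne.symm hxy, Finset.mem_filter.mpr ⟨hy, by rw [extP_y]; exact hx0⟩⟩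
  have c1 := Finset.card_erase_of_mem h1
  have c2 := Finset.card_erase_of_mem h2
  have p1 : 0 < S.card := Finset.card_pos.mpr ⟨x0, h1⟩
  have p2 : 0 < (S.erase x0).card := Finset.card_pos.mpr ⟨y, h2⟩
  omega

end Bij











-- partition of cnt into fibers over P x0
lemma cnt_fiber_sum (α : Type) [Fintype α] [DecidableEq α] (A : Finset α) (e : ℕ) (x0 : α) :
    cnt α A e = ∑ y ∈ univ.erase x0,
      ((matchings α).filter
        (fun P => P x0 = y ∧ (A.filter (fun x => P x ∈ A)).card = 2*e)).card := by
  rw [cnt, Finset.card_eq_sum_card_fiberwise (f := fun P => P x0) (t := univ)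
    (fun P _ => mem_univ _)]
  rw [← Finset.sum_erase_add _ _ (mem_univ x0)]
  have hzero : (((matchings α).filter
      (fun P => (A.filter (fun x => P x ∈ A)).card = 2*e)).filter
        (fun P => P x0 = x0)).card = 0 := by
    rw [Finset.card_eq_zero, Finset.filter_eq_empty_iff]
    intro P hP
    have := (Finset.mem_filter.mp hP).1
    simp only [matchings, Finset.mem_filter, Finset.mem_univ, true_and] at this
    exact (this x0).1
  rw [hzero, Nat.add_zero]
  apply Finset.sum_congr rfl
  intro y hy
  congr 1
  rw [Finset.filter_filter]
  apply Finset.filter_congr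
  intro P hP
  tauto

lemma cnt_empty (α : Type) [Fintype α] [DecidableEq α] :
    cnt α (∅ : Finset α) 0 = (matchings α).card := by
  rw [cnt]
  congr 1
  apply Finset.filter_true_of_mem
  intro P _
  simp

lemma count_main : ∀ (m : ℕ), ∀ (α : Type) [Fintype α] [DecidableEq α],
    ∀ (A : Finset α) (e c f : ℕ),
    Fintype.card α = m → A.card = 2*e + c → Aᶜ.card = c + 2*f → cnt α A e = Hf e c f := by
  intro m
  induction m using Nat.strong_induction_on with
  | _ m IH =>
  intro α instF instD A e c f hm ha hb
  have hmsum : m = (2*e+c) + (c+2*f) := by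
    rw [← hm, ← Finset.card_add_card_compl A, ha, hb]
  by_cases hA : A = ∅
  · subst hA
    simp only [Finset.card_empty] at ha
    obtain ⟨he0, hc0⟩ : e = 0 ∧ c = 0 := by omega
    subst he0; subst hc0
    simp only [Finset.compl_empty, Finset.card_univ, hm] at hb
    rcases f with _ | f₀
    · -- m = 0, α empty
      have hm0 : Fintype.card α = 0 := by omega
      have hE : IsEmpty α := Fintype.card_eq_zero_iff.mp hm0
      rw [cnt_empty]
      have : matchings α = Finset.univ := by
        apply Finset.eq_univ_of_forall
        intro P
        simp only [matchings, Finset.mem_filter, Finset.mem_univ, true_and]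
        intro x
        exact hE.elim x
      rw [this, Finset.card_univ, Fintype.card_perm, hm0]
      simp [Hf, mm2]
    · -- m = 2f₀ + 2 > 0
      have hpos : 0 < Fintype.card α := by omega
      obtain ⟨x0⟩ := Fintype.card_pos_iff.mp hpos
      rw [cnt_fiber_sum α ∅ 0 x0]
      have hfib : ∀ y ∈ univ.erase x0,
          ((matchings α).filter (fun P => P x0 = y ∧
            ((∅ : Finset α).filter (fun x => P x ∈ (∅ : Finset α))).card = 2*0)).card
          = Hf 0 0 f₀ := by
        intro y hy
        have hxy : x0 ≠ y := Ne.symm (Finset.mem_erase.mp hy).1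
        rw [fiber_card x0 y hxy
          (p := fun P => ((∅ : Finset α).filter (fun x => P x ∈ (∅ : Finset α))).card = 2*0)]
        have ht : ((matchings {z : α // z ≠ x0 ∧ z ≠ y}).filter
            (fun Q => ((∅ : Finset α).filter
              (fun x => extP x0 y Q x ∈ (∅ : Finset α))).card = 2*0)).card
            = cnt {z : α // z ≠ x0 ∧ z ≠ y} ∅ 0 := by
          rw [cnt_empty]
          congr 1
          apply Finset.filter_true_of_mem
          intro Q _
          simp
        rw [ht]
        refine IH (m-2) (by omega) _ _ 0 0 f₀ ?_ (by simp) ?_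
        · rw [card_beta x0 y hxy, hm]
        · rw [Finset.compl_empty, Finset.card_univ, card_beta x0 y hxy, hm]
          omega
      rw [Finset.sum_congr rfl hfib, Finset.sum_const, Finset.card_erase_of_mem (mem_univ x0),
        Finset.card_univ, hm, smul_eq_mul]
      rw [show m - 1 = 2*f₀+1 from by omega]
      simp only [Hf, Nat.mul_zero, Nat.zero_add, Nat.choose_self, Nat.descFactorial_zero, mm2]
      ring
  · obtain ⟨x0, hx0⟩ := Finset.nonempty_iff_ne_empty.mpr hA
    have hm1 : 0 < m := by rw [← hm]; exact Fintype.card_pos_iff.mpr ⟨x0⟩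
    rw [cnt_fiber_sum α A e x0]
    rw [← Finset.sum_filter_add_sum_filter_not (univ.erase x0) (fun y => y ∈ A)]
    have hfa : (univ.erase x0).filter (fun y => y ∈ A) = A.erase x0 := by
      ext y
      simp only [Finset.mem_filter, Finset.mem_erase, Finset.mem_univ, and_true, true_and]
    have hfb : (univ.erase x0).filter (fun y => y ∉ A) = Aᶜ := by
      ext y
      simp only [Finset.mem_filter, Finset.mem_erase, Finset.mem_univ, and_true, true_and,
        Finset.mem_compl]
      constructor
      · rintro ⟨_, h⟩; exact h
      · intro h; exact ⟨fun hy => h (hy ▸ hx0), h⟩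
    rw [hfa, hfb]
    -- general computation of the fibers for y ∉ A
    have hout : ∀ y ∈ Aᶜ,
        ((matchings α).filter (fun P => P x0 = y ∧
          (A.filter (fun x => P x ∈ A)).card = 2*e)).card
        = cnt {z : α // z ≠ x0 ∧ z ≠ y}
            (univ.filter (fun z : {z : α // z ≠ x0 ∧ z ≠ y} => (z : α) ∈ A)) e := by
      intro y hy
      have hyA : y ∉ A := Finset.mem_compl.mp hy
      have hxy : x0 ≠ y := fun h => hyA (h ▸ hx0)
      rw [fiber_card x0 y hxy
        (p := fun P => (A.filter (fun x => P x ∈ A)).card = 2*e)]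
      rw [cnt]
      congr 1
      apply Finset.filter_congr
      intro Q _
      rw [cond_out x0 y A hxy hyA Q]
    -- cardinalities of the reduced set for y ∉ A
    have houtcard : ∀ y ∈ Aᶜ,
        (univ.filter (fun z : {z : α // z ≠ x0 ∧ z ≠ y} => (z : α) ∈ A)).card = A.card - 1 := by
      intro y hy
      have hyA : y ∉ A := Finset.mem_compl.mp hy
      rw [card_Asub x0 y A,
        Finset.erase_eq_of_notMem (fun h => hyA (Finset.mem_of_mem_erase h)),
        Finset.card_erase_of_mem hx0]
    rcases e with _ | e₀
    · -- e = 0 : fibers over A.erase x0 vanish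
      rcases c with _ | c₀
      · exfalso
        have := Finset.card_pos.mpr ⟨x0, hx0⟩
        omega
      have h1 : ∀ y ∈ A.erase x0,
          ((matchings α).filter (fun P => P x0 = y ∧
            (A.filter (fun x => P x ∈ A)).card = 2*0)).card = 0 := by
        intro y hy
        rw [Finset.card_eq_zero, Finset.filter_eq_empty_iff]
        intro P _
        rintro ⟨hPx, hcard⟩
        have hmem : x0 ∈ A.filter (fun x => P x ∈ A) :=
          Finset.mem_filter.mpr ⟨hx0, by rw [hPx]; exact (Finset.mem_erase.mp hy).2⟩
        have := Finset.card_pos.mpr ⟨x0, hmem⟩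
        omega
      have h2 : ∀ y ∈ Aᶜ,
          ((matchings α).filter (fun P => P x0 = y ∧
            (A.filter (fun x => P x ∈ A)).card = 2*0)).card = Hf 0 c₀ f := by
        intro y hy
        have hyA : y ∉ A := Finset.mem_compl.mp hy
        have hxy : x0 ≠ y := fun h => hyA (h ▸ hx0)
        rw [hout y hy]
        refine IH (m-2) (by omega) _ _ 0 c₀ f ?_ ?_ ?_
        · rw [card_beta x0 y hxy, hm]
        · rw [houtcard y hy, ha]
          omega
        · rw [Finset.card_compl, houtcard y hy, card_beta x0 y hxy, hm, ha]
          omega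
      rw [Finset.sum_congr rfl h1, Finset.sum_congr rfl h2, Finset.sum_const,
        Finset.sum_const, smul_eq_mul, smul_eq_mul, hb, key_ide]
      simp
    · -- e = e₀ + 1
      have hin : ∀ y ∈ A.erase x0,
          ((matchings α).filter (fun P => P x0 = y ∧
            (A.filter (fun x => P x ∈ A)).card = 2*(e₀+1))).card
          = cnt {z : α // z ≠ x0 ∧ z ≠ y}
              (univ.filter (fun z : {z : α // z ≠ x0 ∧ z ≠ y} => (z : α) ∈ A)) e₀ := by
        intro y hy
        have hyA : y ∈ A := (Finset.mem_erase.mp hy).2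
        have hxy : x0 ≠ y := Ne.symm (Finset.mem_erase.mp hy).1
        rw [fiber_card x0 y hxy
          (p := fun P => (A.filter (fun x => P x ∈ A)).card = 2*(e₀+1))]
        rw [cnt]
        congr 1
        apply Finset.filter_congr
        intro Q _
        rw [cond_in x0 y A hxy hx0 hyA Q]
        omega
      have hincard : ∀ y ∈ A.erase x0,
          (univ.filter (fun z : {z : α // z ≠ x0 ∧ z ≠ y} => (z : α) ∈ A)).card
            = A.card - 2 := by
        intro y hy
        have hyA : y ∈ A := (Finset.mem_erase.mp hy).2
        have hxy' : y ≠ x0 := (Finset.mem_erase.mp hy).1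
        rw [card_Asub x0 y A,
          Finset.card_erase_of_mem (Finset.mem_erase.mpr ⟨hxy', hyA⟩),
          Finset.card_erase_of_mem hx0]
        omega
      have h1 : ∀ y ∈ A.erase x0,
          ((matchings α).filter (fun P => P x0 = y ∧
            (A.filter (fun x => P x ∈ A)).card = 2*(e₀+1))).card = Hf e₀ c f := by
        intro y hy
        have hxy : x0 ≠ y := Ne.symm (Finset.mem_erase.mp hy).1
        rw [hin y hy]
        refine IH (m-2) (by omega) _ _ e₀ c f ?_ ?_ ?_
        · rw [card_beta x0 y hxy, hm]
        · rw [hincard y hy, ha]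
          omega
        · rw [Finset.card_compl, hincard y hy, card_beta x0 y hxy, hm, ha]
          omega
      rcases c with _ | c₀
      · -- c = 0 : fibers over Aᶜ vanish
        have h2 : ∀ y ∈ Aᶜ,
            ((matchings α).filter (fun P => P x0 = y ∧
              (A.filter (fun x => P x ∈ A)).card = 2*(e₀+1))).card = 0 := by
          intro y hy
          rw [hout y hy]
          apply cnt_zero
          rw [houtcard y hy, ha]
          omega
        rw [Finset.sum_congr rfl h1, Finset.sum_congr rfl h2, Finset.sum_const,
          Finset.sum_const, smul_eq_mul, smul_eq_mul,
          Finset.card_erase_of_mem hx0, ha, key_id0]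
        simp
        omega
      · -- c = c₀ + 1
        have h2 : ∀ y ∈ Aᶜ,
            ((matchings α).filter (fun P => P x0 = y ∧
              (A.filter (fun x => P x ∈ A)).card = 2*(e₀+1))).card = Hf (e₀+1) c₀ f := by
          intro y hy
          have hyA : y ∉ A := Finset.mem_compl.mp hy
          have hxy : x0 ≠ y := fun h => hyA (h ▸ hx0)
          rw [hout y hy]
          refine IH (m-2) (by omega) _ _ (e₀+1) c₀ f ?_ ?_ ?_
          · rw [card_beta x0 y hxy, hm]
          · rw [houtcard y hy, ha]
            omega
          · rw [Finset.card_compl, houtcard y hy, card_beta x0 y hxy, hm, ha]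
            omega
        rw [Finset.sum_congr rfl h1, Finset.sum_congr rfl h2, Finset.sum_const,
          Finset.sum_const, smul_eq_mul, smul_eq_mul,
          Finset.card_erase_of_mem hx0, ha, hb, key_id]
        have : 2*(e₀+1) + (c₀+1) - 1 = 2*e₀+c₀+2 := by omega
        rw [this]


lemma Mpair_mm2 (k : ℕ) : Mpair (2*k) = (mm2 k : ℝ) := by
  rw [Mpair, Nat.mul_div_cancel_left k (by norm_num : 0 < 2), fact_two_mul k]
  push_cast
  rw [mul_div_assoc, div_self, mul_one]
  positivity

lemma bucket_card (d n : ℕ) (hd : 1 ≤ d) (S : Finset ℕ) (hS : S ⊆ Finset.range n) :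
    (univ.filter (fun x : Fin (d*n) => (x:ℕ)/d ∈ S)).card = d * S.card := by
  rw [show d * S.card = (S ×ˢ Finset.range d).card from by
    rw [Finset.card_product, Finset.card_range]; ring]
  refine Finset.card_bij (i := fun (x : Fin (d*n)) (_ : x ∈ univ.filter (fun x : Fin (d*n) => (x:ℕ)/d ∈ S)) => ((x:ℕ)/d, (x:ℕ)%d)) ?_ ?_ ?_
  · intro x hx
    rw [Finset.mem_product]
    exact ⟨(Finset.mem_filter.mp hx).2, Finset.mem_range.mpr (Nat.mod_lt _ hd)⟩
  · intro x1 _ x2 _ h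
    have h1 := congrArg Prod.fst h
    have h2 := congrArg Prod.snd h
    simp only at h1 h2
    apply Fin.ext
    rw [← Nat.div_add_mod (x1:ℕ) d, ← Nat.div_add_mod (x2:ℕ) d, h1, h2]
  · rintro ⟨i, j⟩ hij
    rw [Finset.mem_product] at hij
    have hi : i < n := Finset.mem_range.mp (hS hij.1)
    have hj : j < d := Finset.mem_range.mp hij.2
    have hlt : d*i + j < d*n := by
      calc d*i + j < d*i + d := by omega
      _ = d*(i+1) := by ring
      _ ≤ d*n := Nat.mul_le_mul_left d (by omega)
    refine ⟨⟨d*i+j, hlt⟩, ?_, ?_⟩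
    · apply Finset.mem_filter.mpr
      refine ⟨Finset.mem_univ _, ?_⟩
      simp only
      rw [Nat.mul_add_div (by omega), Nat.div_eq_of_lt hj]
      simpa using hij.1
    · simp only
      rw [Nat.mul_add_div (by omega), Nat.div_eq_of_lt hj, Nat.mul_add_mod,
        Nat.mod_eq_of_lt hj]
      simp


/-- in the pairing model with `n` buckets of `d` points (`d·n` even),
the expected number of sets of `s` buckets containing exactly `e` pairs equals
`C(n,s)·C(ds,2e)·C(d(n−s), ds−2e)·(ds−2e)!·M(2e)·M(d(n−s)−(ds−2e))/M(dn)`. -/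
theorem statement12 (d n : ℕ) (hd : 1 ≤ d) (hn : 1 ≤ n) (hpar : Even (d * n))
    (s e : ℕ) (hs : s ≤ n) (he : 2 * e ≤ d * s) (he' : d * s - 2 * e ≤ d * (n - s)) :
    (∑ P ∈ pairings d n, (goodSets d n s e P : ℝ)) / ((pairings d n).card : ℝ)
      = (n.choose s : ℝ) * ((d * s).choose (2 * e) : ℝ)
          * ((d * (n - s)).choose (d * s - 2 * e) : ℝ)
          * (Nat.factorial (d * s - 2 * e) : ℝ)
          * Mpair (2 * e) * Mpair (d * (n - s) - (d * s - 2 * e)) / Mpair (d * n) := by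

  obtain ⟨k, hk⟩ := hpar
  have hds : d*s + d*(n-s) = d*n := by
    rw [← Nat.mul_add, Nat.add_sub_cancel' hs]
  set c := d*s - 2*e with hcdef
  set f := (d*(n-s) - c)/2 with hfdef
  have h1 : d*s = 2*e + c := by omega
  have h2 : d*(n-s) = c + 2*f := by omega
  have hmn : d*n = 2*e + c + (c + 2*f) := by omega
  have hpm : pairings d n = matchings (Fin (d*n)) := by
    simp only [pairings, matchings]
    convert rfl using 2 <;> exact Subsingleton.elim _ _
  -- per-S count
  have hcount : ∀ S ∈ (Finset.range n).powersetCard s,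
      ((matchings (Fin (d*n))).filter (fun P => (Finset.univ.filter
        (fun x : Fin (d * n) => (x : ℕ) / d ∈ S ∧ ((P x : ℕ)) / d ∈ S)).card = 2 * e)).card
      = Hf e c f := by
    intro S hS
    rw [Finset.mem_powersetCard] at hS
    set A : Finset (Fin (d*n)) := univ.filter (fun x : Fin (d*n) => (x:ℕ)/d ∈ S) with hAdef
    have hfe : ∀ P : Equiv.Perm (Fin (d*n)),
        (Finset.univ.filter
          (fun x : Fin (d * n) => (x : ℕ) / d ∈ S ∧ ((P x : ℕ)) / d ∈ S))
        = A.filter (fun x => P x ∈ A) := by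
      intro P
      rw [hAdef, Finset.filter_filter]
      apply Finset.filter_congr
      intro x _
      simp
    have hA : A.card = 2*e + c := by
      rw [hAdef, bucket_card d n hd S hS.1, hS.2, ← h1]
    have hAc : Aᶜ.card = c + 2*f := by
      rw [Finset.card_compl, hA, Fintype.card_fin]
      omega
    have := count_main (d*n) (Fin (d*n)) A e c f (Fintype.card_fin _) hA hAc
    rw [cnt] at this
    rw [← this]
    congr 1
    apply Finset.filter_congr
    intro P _
    rw [hfe P]
  -- total number of pairings
  have htot : ((pairings d n).card : ℕ) = mm2 (e + c + f) := by
    rw [hpm, ← cnt_empty]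
    have := count_main (d*n) (Fin (d*n)) ∅ 0 0 (e+c+f) (Fintype.card_fin _)
      (by simp) (by rw [Finset.card_compl, Finset.card_empty, Fintype.card_fin]; omega)
    rw [this]
    simp [Hf, mm2]
  -- sum over pairings
  have hsum : (∑ P ∈ pairings d n, (goodSets d n s e P : ℝ))
      = ((n.choose s * Hf e c f : ℕ) : ℝ) := by
    have hnat : (∑ P ∈ pairings d n, goodSets d n s e P) = n.choose s * Hf e c f := by
      have : ∀ P ∈ pairings d n, goodSets d n s e P
          = ∑ S ∈ (Finset.range n).powersetCard s,
            (if (Finset.univ.filter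
              (fun x : Fin (d * n) => (x : ℕ) / d ∈ S ∧ ((P x : ℕ)) / d ∈ S)).card = 2 * e
             then 1 else 0) := by
        intro P _
        simp only [goodSets]
        rw [Finset.card_filter]
      rw [Finset.sum_congr rfl this, Finset.sum_comm]
      have hswap : ∀ S ∈ (Finset.range n).powersetCard s,
          (∑ P ∈ pairings d n,
            if (Finset.univ.filter
              (fun x : Fin (d * n) => (x : ℕ) / d ∈ S ∧ ((P x : ℕ)) / d ∈ S)).card = 2 * e
            then 1 else 0) = Hf e c f := by
        intro S hS
        rw [← Finset.card_filter, hpm, hcount S hS]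
      rw [Finset.sum_congr rfl hswap, Finset.sum_const, smul_eq_mul,
        Finset.card_powersetCard, Finset.card_range]
    rw [← hnat]
    push_cast
    rfl
  rw [hsum, htot]
  -- rewrite the M values
  rw [show d * (n - s) - (d * s - 2 * e) = 2*f from by omega,
    show d*n = 2*(e+c+f) from by omega,
    show 2*e = 2*e from rfl]
  rw [Mpair_mm2, Mpair_mm2, Mpair_mm2]
  rw [h1, h2]
  congr 1
  push_cast [Hf, Nat.descFactorial_eq_factorial_mul_choose]
  ring


end
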